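/- Fix x ∈ [0,1]^d, τ ≥ 1, δ ∈ (0,1/2), and Ω₀ > 0. Let θ₀ = (Ω₀, η_{0,0}, …, η_{d,0}) and θ = (Ω, η_0, …, η_d) with all η_j, η_{j,0} : [0,∞) → ℝ continuous, |Ω/Ω₀ − 1| < δ, and sup_{t∈[0,τ]} |η_j(t) − η_{j,0}(t)| ≤ δ/(1+τ) for every j ∈ {0,…,d}. Then ∫_0^τ log(f_x(t,θ₀)/f_x(t,θ)) f_x(t,θ₀) dt ≤ δ ( 1/(1−δ) + (d+1)/(τ+1) + Ω₀(d+1) + Ω₀ ∫_0^∞ t f_x(t,θ₀) dt ). -/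

import Mathlib

open MeasureTheory ProbabilityTheory Filter Topology
open scoped ENNReal NNReal

noncomputable section

/-- The sigmoid (logistic) function `σ(x) = 1/(1+e^{-x})`. -/
def sigmoid (y : ℝ) : ℝ := 1 / (1 + Real.exp (-y))

/-- The function `h_d` of the paper. -/
def hfun (d : ℕ) (t : ℝ) : ℝ :=
  if t ≤ 1 then (d + 1) / (1 + Real.log (1 - Real.exp (-1)))
  else (d + 1) / (t + Real.log (1 - Real.exp (-t)))

/-- `Y_x(t) = η₀(t) + ∑_{j=1}^d x_j η_j(t)`. -/
def Yproc {d : ℕ} (η : Fin (d + 1) → ℝ → ℝ) (x : Fin d → ℝ) (t : ℝ) : ℝ :=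
  η 0 t + ∑ j : Fin d, x j * η j.succ t

/-- The survival density `f_x(t,θ) = Ω σ(Y_x(t)) exp(-∫₀ᵗ Ω σ(Y_x(s)) ds)` for `t ≥ 0`
(and `0` for `t < 0`), for a parameter `θ = (Ω, η)`. -/
def dens {d : ℕ} (θ : ℝ × (Fin (d + 1) → ℝ → ℝ)) (x : Fin d → ℝ) (t : ℝ) : ℝ :=
  if 0 ≤ t then
    θ.1 * sigmoid (Yproc θ.2 x t) *
      Real.exp (-(∫ s in (0:ℝ)..t, θ.1 * sigmoid (Yproc θ.2 x s)))
  else 0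

/-- The unit cube `[0,1]^d` of covariates. -/
def unitCube (d : ℕ) : Set (Fin d → ℝ) := Set.univ.pi fun _ => Set.Icc (0:ℝ) 1

lemma one_add_exp_pos (y : ℝ) : 0 < 1 + Real.exp y := by positivity

lemma sigmoid_pos (y : ℝ) : 0 < sigmoid y := by
  unfold sigmoid; positivity

lemma sigmoid_le_one (y : ℝ) : sigmoid y ≤ 1 := by
  unfold sigmoid
  rw [div_le_one (one_add_exp_pos _)]
  nlinarith [Real.exp_pos (-y)]

lemma hasDerivAt_sigmoid (y : ℝ) :
    HasDerivAt sigmoid (Real.exp (-y) / (1 + Real.exp (-y))^2) y := by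
  have h1 : HasDerivAt (fun z : ℝ => 1 + Real.exp (-z)) (-Real.exp (-y)) y := by
    have := (Real.hasDerivAt_exp (-y)).comp y (hasDerivAt_neg y)
    simpa using (this.const_add 1)
  have h2 := (hasDerivAt_const y (1:ℝ)).div h1 (ne_of_gt (one_add_exp_pos (-y)))
  refine h2.congr_deriv ?_
  ring

lemma sigmoid_lipschitz (a b : ℝ) : |sigmoid a - sigmoid b| ≤ |a - b| / 4 := by
  have key : ∀ y : ℝ, ‖Real.exp (-y) / (1 + Real.exp (-y))^2‖ ≤ (1:ℝ)/4 := by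
    intro y
    rw [Real.norm_eq_abs, abs_of_nonneg (by positivity)]
    rw [div_le_div_iff₀ (by positivity) (by norm_num)]
    nlinarith [Real.exp_pos (-y), sq_nonneg (1 - Real.exp (-y))]
  have := Convex.norm_image_sub_le_of_norm_hasDerivWithin_le
    (f := sigmoid) (f' := fun y => Real.exp (-y) / (1 + Real.exp (-y))^2)
    (fun y _ => (hasDerivAt_sigmoid y).hasDerivWithinAt) (fun y _ => key y)
    convex_univ (Set.mem_univ b) (Set.mem_univ a)
  rw [Real.norm_eq_abs, Real.norm_eq_abs] at this
  linarith [this]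

lemma log_sigmoid_diff_le (a b : ℝ) :
    Real.log (sigmoid a) - Real.log (sigmoid b) ≤ |a - b| := by
  unfold sigmoid
  rw [Real.log_div one_ne_zero (ne_of_gt (one_add_exp_pos (-a))),
      Real.log_div one_ne_zero (ne_of_gt (one_add_exp_pos (-b))), Real.log_one]
  have h1 : 1 + Real.exp (-b) ≤ Real.exp (|a - b|) * (1 + Real.exp (-a)) := by
    have e1 : (1:ℝ) ≤ Real.exp (|a - b|) := Real.one_le_exp (abs_nonneg _)
    have e2 : Real.exp (-b) ≤ Real.exp (|a - b|) * Real.exp (-a) := by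
      rw [← Real.exp_add]
      exact Real.exp_le_exp.mpr (by cases abs_cases (a - b) with
        | inl h => linarith [h.1]
        | inr h => linarith [h.1, abs_nonneg (a-b), le_abs_self (a-b)])
    nlinarith [Real.exp_pos (-a)]
  have := Real.log_le_log (one_add_exp_pos (-b)) h1
  rw [Real.log_mul (by positivity) (ne_of_gt (one_add_exp_pos (-a))), Real.log_exp] at this
  linarith

lemma sigmoid_continuous : Continuous sigmoid := by
  unfold sigmoid
  exact continuous_const.div (by continuity) (fun y => ne_of_gt (one_add_exp_pos (-y)))

lemma Yproc_max_continuous {d : ℕ} (η : Fin (d + 1) → ℝ → ℝ) (x : Fin d → ℝ)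
    (h : ∀ j, ContinuousOn (η j) (Set.Ici 0)) :
    Continuous (fun t => Yproc η x (max t 0)) := by
  have hm : Continuous (fun t : ℝ => max t 0) := continuous_id.max continuous_const
  have hj : ∀ j, Continuous (fun t => η j (max t 0)) := fun j =>
    (h j).comp_continuous hm (fun t => le_max_right t 0)
  unfold Yproc
  exact ((hj 0).add (continuous_finset_sum _ fun j _ => continuous_const.mul (hj j.succ)))

lemma dens_nonneg {d : ℕ} (θ : ℝ × (Fin (d + 1) → ℝ → ℝ)) (x : Fin d → ℝ) (t : ℝ)
    (hθ : 0 ≤ θ.1) : 0 ≤ dens θ x t := by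
  unfold dens
  split
  · have := sigmoid_pos (Yproc θ.2 x t)
    positivity
  · exact le_refl 0

set_option maxHeartbeats 2000000 in
/-- Bound for the truncated Kullback–Leibler integral: for `x ∈ [0,1]^d`, `τ ≥ 1`,
`δ ∈ (0,1/2)`, `|Ω/Ω₀ - 1| < δ`, and `sup_{[0,τ]}|η_j - η_{j,0}| ≤ δ/(1+τ)` for all `j`,
`∫₀^τ log(f_x(t,θ₀)/f_x(t,θ)) f_x(t,θ₀) dt ≤ δ (1/(1-δ) + (d+1)/(τ+1) + Ω₀(d+1) + Ω₀ ∫₀^∞ t f_x(t,θ₀) dt)`. -/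
theorem truncated_KL_bound
    {d : ℕ} (hd1 : 1 ≤ d)
    (x : Fin d → ℝ) (hx : x ∈ unitCube d)
    (τ : ℝ) (hτ : 1 ≤ τ)
    (δ : ℝ) (hδ : δ ∈ Set.Ioo (0:ℝ) (1/2))
    (Ω₀ : ℝ) (hΩ₀ : 0 < Ω₀)
    (η₀ η : Fin (d + 1) → ℝ → ℝ)
    (hη₀cont : ∀ j, ContinuousOn (η₀ j) (Set.Ici 0))
    (hηcont : ∀ j, ContinuousOn (η j) (Set.Ici 0))
    (Ω : ℝ) (hΩratio : |Ω / Ω₀ - 1| < δ)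
    (hclose : ∀ j, ∀ t ∈ Set.Icc (0:ℝ) τ, |η j t - η₀ j t| ≤ δ / (1 + τ)) :
    (∫ t in Set.Icc (0:ℝ) τ,
        Real.log (dens (Ω₀, η₀) x t / dens (Ω, η) x t) * dens (Ω₀, η₀) x t) ≤
      δ * (1 / (1 - δ) + (d + 1) / (τ + 1) + Ω₀ * (d + 1) +
        Ω₀ * ∫ t in Set.Ici (0:ℝ), t * dens (Ω₀, η₀) x t) := by
  obtain ⟨hδ0, hδhalf⟩ := hδ
  have hτ0 : (0:ℝ) < τ := lt_of_lt_of_le one_pos hτ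
  have h1τ : (0:ℝ) < 1 + τ := by linarith
  -- bounds on Ω
  rw [abs_lt] at hΩratio
  have hΩdiv : Ω / Ω₀ * Ω₀ = Ω := div_mul_cancel₀ Ω (ne_of_gt hΩ₀)
  have hΩ1 : (1 - δ) * Ω₀ < Ω := by
    have := mul_lt_mul_of_pos_right (show 1 - δ < Ω / Ω₀ by linarith [hΩratio.1]) hΩ₀
    rwa [hΩdiv] at this
  have hΩ2 : Ω < (1 + δ) * Ω₀ := by
    have := mul_lt_mul_of_pos_right (show Ω / Ω₀ < 1 + δ by linarith [hΩratio.2]) hΩ₀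
    rwa [hΩdiv] at this
  have hΩpos : 0 < Ω := lt_trans (by nlinarith) hΩ1
  -- notation
  set ε0 : ℝ := δ / (1 + τ) with hε0def
  have hε00 : 0 ≤ ε0 := by positivity
  set ε : ℝ := (d + 1) * ε0 with hεdef
  have hεnn : 0 ≤ ε := by positivity
  set Y0c : ℝ → ℝ := fun t => Yproc η₀ x (max t 0) with hY0cdef
  set Yc : ℝ → ℝ := fun t => Yproc η x (max t 0) with hYcdef
  have hY0cont : Continuous Y0c := Yproc_max_continuous η₀ x hη₀cont
  have hYcont : Continuous Yc := Yproc_max_continuous η x hηcont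
  set h0 : ℝ → ℝ := fun t => Ω₀ * sigmoid (Y0c t) with hh0def
  set hf : ℝ → ℝ := fun t => Ω * sigmoid (Yc t) with hhfdef
  have hh0cont : Continuous h0 := continuous_const.mul (sigmoid_continuous.comp hY0cont)
  have hhfcont : Continuous hf := continuous_const.mul (sigmoid_continuous.comp hYcont)
  have hh0pos : ∀ t, 0 < h0 t := fun t => mul_pos hΩ₀ (sigmoid_pos _)
  have hhfpos : ∀ t, 0 < hf t := fun t => mul_pos hΩpos (sigmoid_pos _)
  set Λ0 : ℝ → ℝ := fun t => ∫ s in (0:ℝ)..t, h0 s with hΛ0def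
  set Λf : ℝ → ℝ := fun t => ∫ s in (0:ℝ)..t, hf s with hΛfdef
  have hΛ0deriv : ∀ t, HasDerivAt Λ0 (h0 t) t := fun t =>
    (hh0cont.integral_hasStrictDerivAt 0 t).hasDerivAt
  have hΛ0cont : Continuous Λ0 := by
    rw [continuous_iff_continuousAt]; exact fun t => (hΛ0deriv t).continuousAt
  have hΛfcont : Continuous Λf := by
    rw [continuous_iff_continuousAt]
    exact fun t => ((hhfcont.integral_hasStrictDerivAt 0 t).hasDerivAt).continuousAt
  have hΛ00 : Λ0 0 = 0 := intervalIntegral.integral_same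
  have hΛ0nonneg : ∀ t, 0 ≤ t → 0 ≤ Λ0 t := fun t ht =>
    intervalIntegral.integral_nonneg ht (fun s _ => (hh0pos s).le)
  -- density formulas
  have hmax : ∀ t : ℝ, 0 ≤ t → max t 0 = t := fun t ht => max_eq_left ht
  have hdens0 : ∀ t : ℝ, 0 ≤ t → dens (Ω₀, η₀) x t = h0 t * Real.exp (-(Λ0 t)) := by
    intro t ht
    unfold dens
    rw [if_pos ht]
    have hcongr : (∫ s in (0:ℝ)..t, (Ω₀, η₀).1 * sigmoid (Yproc (Ω₀, η₀).2 x s)) = Λ0 t := by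
      rw [hΛ0def]
      apply intervalIntegral.integral_congr
      intro s hs
      rw [Set.uIcc_of_le ht] at hs
      simp only [hh0def, hY0cdef, hmax s hs.1]
    rw [hcongr]
    simp only [hh0def, hY0cdef, hmax t ht]
  have hdensf : ∀ t : ℝ, 0 ≤ t → dens (Ω, η) x t = hf t * Real.exp (-(Λf t)) := by
    intro t ht
    unfold dens
    rw [if_pos ht]
    have hcongr : (∫ s in (0:ℝ)..t, (Ω, η).1 * sigmoid (Yproc (Ω, η).2 x s)) = Λf t := by
      rw [hΛfdef]
      apply intervalIntegral.integral_congr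
      intro s hs
      rw [Set.uIcc_of_le ht] at hs
      simp only [hhfdef, hYcdef, hmax s hs.1]
    rw [hcongr]
    simp only [hhfdef, hYcdef, hmax t ht]
  -- Y difference bound
  have hxj : ∀ j : Fin d, 0 ≤ x j ∧ x j ≤ 1 := by
    intro j
    have := hx j (Set.mem_univ j)
    exact ⟨this.1, this.2⟩
  have hYdiff : ∀ t ∈ Set.Icc (0:ℝ) τ, |Yc t - Y0c t| ≤ ε := by
    intro t ht
    have hmt : max t 0 = t := hmax t ht.1
    have hrw : Yc t - Y0c t =
        (η 0 t - η₀ 0 t) + ∑ j : Fin d, x j * (η j.succ t - η₀ j.succ t) := by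
      simp only [hYcdef, hY0cdef, hmt]
      unfold Yproc
      simp only [mul_sub, Finset.sum_sub_distrib]
      ring
    have hterm : ∀ j : Fin d, |x j * (η j.succ t - η₀ j.succ t)| ≤ ε0 := by
      intro j
      rw [abs_mul]
      have h1 : |x j| ≤ 1 := by rw [abs_of_nonneg (hxj j).1]; exact (hxj j).2
      have h2 : |η j.succ t - η₀ j.succ t| ≤ ε0 := hclose j.succ t ht
      nlinarith [abs_nonneg (x j), abs_nonneg (η j.succ t - η₀ j.succ t)]
    have hsum : |∑ j : Fin d, x j * (η j.succ t - η₀ j.succ t)| ≤ (d : ℝ) * ε0 := by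
      refine le_trans (Finset.abs_sum_le_sum_abs _ _) ?_
      refine le_trans (Finset.sum_le_sum fun j _ => hterm j) ?_
      rw [Finset.sum_const, Finset.card_univ, Fintype.card_fin, nsmul_eq_mul]
    rw [hrw]
    have habs := abs_add_le (η 0 t - η₀ 0 t) (∑ j : Fin d, x j * (η j.succ t - η₀ j.succ t))
    have h0' := hclose 0 t ht
    have : ε = (d:ℝ) * ε0 + ε0 := by rw [hεdef]; ring
    rw [this]
    linarith
  have hσdiff : ∀ t ∈ Set.Icc (0:ℝ) τ, |sigmoid (Yc t) - sigmoid (Y0c t)| ≤ ε / 4 := by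
    intro t ht
    calc |sigmoid (Yc t) - sigmoid (Y0c t)| ≤ |Yc t - Y0c t| / 4 := sigmoid_lipschitz _ _
      _ ≤ ε / 4 := by linarith [hYdiff t ht]
  -- case analysis producing pointwise bound
  obtain ⟨c, κ, hc, hκ, hbound, hfinal⟩ :
      ∃ c κ : ℝ, 0 ≤ c ∧ 0 ≤ κ ∧
        (∀ t ∈ Set.Icc (0:ℝ) τ,
          Real.log (dens (Ω₀, η₀) x t / dens (Ω, η) x t) ≤ c + κ * Λ0 t) ∧
        c + κ ≤ δ * (1 / (1 - δ) + (d + 1) / (τ + 1) + Ω₀ * (d + 1)) := by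
    have h1δ : (0:ℝ) < 1 - δ := by linarith
    have hlogσ : ∀ t ∈ Set.Icc (0:ℝ) τ,
        Real.log (sigmoid (Y0c t)) - Real.log (sigmoid (Yc t)) ≤ ε := by
      intro t ht
      refine le_trans (log_sigmoid_diff_le _ _) ?_
      rw [abs_sub_comm]
      exact hYdiff t ht
    have hlogr : ∀ t ∈ Set.Icc (0:ℝ) τ,
        Real.log (dens (Ω₀, η₀) x t / dens (Ω, η) x t) =
          (Real.log Ω₀ - Real.log Ω) +
          (Real.log (sigmoid (Y0c t)) - Real.log (sigmoid (Yc t))) + (Λf t - Λ0 t) := by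
      intro t ht
      rw [hdens0 t ht.1, hdensf t ht.1]
      rw [Real.log_div (ne_of_gt (mul_pos (hh0pos t) (Real.exp_pos _)))
            (ne_of_gt (mul_pos (hhfpos t) (Real.exp_pos _))),
          Real.log_mul (ne_of_gt (hh0pos t)) (Real.exp_ne_zero _),
          Real.log_mul (ne_of_gt (hhfpos t)) (Real.exp_ne_zero _),
          Real.log_exp, Real.log_exp]
      show Real.log (Ω₀ * sigmoid (Y0c t)) + _ - _ = _
      rw [Real.log_mul (ne_of_gt hΩ₀) (ne_of_gt (sigmoid_pos _)),
          Real.log_mul (ne_of_gt hΩpos) (ne_of_gt (sigmoid_pos _))]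
      ring
    have hΛsub : ∀ t ∈ Set.Icc (0:ℝ) τ,
        Λf t - Λ0 t = ∫ s in (0:ℝ)..t, (hf s - h0 s) :=
      fun t _ => (intervalIntegral.integral_sub
        (hhfcont.intervalIntegrable _ _) (hh0cont.intervalIntegrable _ _)).symm
    have hεeq : ε = δ * ((d + 1) / (τ + 1)) := by
      rw [hεdef, hε0def]; ring_nf
    have hτε : τ * ε ≤ (d + 1) * δ := by
      have h1 : τ / (1 + τ) ≤ 1 := by rw [div_le_one h1τ]; linarith
      have h2 : τ * ε = ((d:ℝ) + 1) * δ * (τ / (1 + τ)) := by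
        rw [hεdef, hε0def]; ring
      rw [h2]
      nlinarith [mul_nonneg (by positivity : (0:ℝ) ≤ ((d:ℝ)+1) * δ) (sub_nonneg.mpr h1)]
    rcases le_total Ω Ω₀ with hcase | hcase
    · -- Ω ≤ Ω₀
      refine ⟨δ / (1 - δ) + ε + τ * (Ω₀ * (ε / 4)), 0, by positivity, le_refl 0, ?_, ?_⟩
      · intro t ht
        rw [hlogr t ht]
        have hlogΩ : Real.log Ω₀ - Real.log Ω ≤ δ / (1 - δ) := by
          rw [← Real.log_div (ne_of_gt hΩ₀) (ne_of_gt hΩpos)]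
          refine le_trans (Real.log_le_sub_one_of_pos (by positivity)) ?_
          have h1 : Ω₀ / Ω ≤ 1 / (1 - δ) := by
            rw [div_le_div_iff₀ hΩpos h1δ]
            nlinarith
          have h2 : δ / (1 - δ) = 1 / (1 - δ) - 1 := by field_simp; ring
          linarith
        have hΛbd : Λf t - Λ0 t ≤ τ * (Ω₀ * (ε / 4)) := by
          rw [hΛsub t ht]
          have hmono : (∫ s in (0:ℝ)..t, (hf s - h0 s)) ≤
              ∫ _s in (0:ℝ)..t, Ω₀ * (ε / 4) := by
            apply intervalIntegral.integral_mono_on ht.1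
              ((hhfcont.sub hh0cont).intervalIntegrable _ _) intervalIntegrable_const
            intro s hs
            have hsτ : s ∈ Set.Icc (0:ℝ) τ := ⟨hs.1, le_trans hs.2 ht.2⟩
            have hσ := hσdiff s hsτ
            have hσabs : sigmoid (Yc s) - sigmoid (Y0c s) ≤ ε / 4 :=
              le_trans (le_abs_self _) hσ
            have hσpos := sigmoid_pos (Yc s)
            show Ω * sigmoid (Yc s) - Ω₀ * sigmoid (Y0c s) ≤ Ω₀ * (ε / 4)
            have f1 := mul_le_mul_of_nonneg_right hcase (sigmoid_pos (Yc s)).le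
            have f2 := mul_le_mul_of_nonneg_left hσabs hΩ₀.le
            linarith
          rw [intervalIntegral.integral_const] at hmono
          have : (t - 0) • (Ω₀ * (ε / 4)) ≤ τ * (Ω₀ * (ε / 4)) := by
            rw [smul_eq_mul, sub_zero]
            apply mul_le_mul_of_nonneg_right ht.2 (by positivity)
          linarith
        have hl := hlogσ t ht
        rw [zero_mul]
        linarith
      · have hrest : τ * (Ω₀ * (ε / 4)) ≤ δ * (Ω₀ * (d + 1)) := by
          have h4 := mul_le_mul_of_nonneg_left hτε hΩ₀.le
          have e3 : (0:ℝ) ≤ δ * (Ω₀ * ((d:ℝ) + 1)) := by positivity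
          linarith
        have hdd : δ / (1 - δ) = δ * (1 / (1 - δ)) := by ring
        linarith [hdd.le, hεeq.le, hrest]
    · -- Ω₀ ≤ Ω
      refine ⟨ε + τ * ((1 + δ) * Ω₀ * (ε / 4)), δ, by positivity, hδ0.le, ?_, ?_⟩
      · intro t ht
        rw [hlogr t ht]
        have hlogΩ : Real.log Ω₀ - Real.log Ω ≤ 0 := by
          have := Real.log_le_log hΩ₀ hcase
          linarith
        have hΛbd : Λf t - Λ0 t ≤ δ * Λ0 t + τ * ((1 + δ) * Ω₀ * (ε / 4)) := by
          rw [hΛsub t ht]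
          have hmono : (∫ s in (0:ℝ)..t, (hf s - h0 s)) ≤
              ∫ s in (0:ℝ)..t, (δ * h0 s + (1 + δ) * Ω₀ * (ε / 4)) := by
            apply intervalIntegral.integral_mono_on ht.1
              ((hhfcont.sub hh0cont).intervalIntegrable _ _)
              (((continuous_const.mul hh0cont).add continuous_const).intervalIntegrable _ _)
            intro s hs
            have hsτ : s ∈ Set.Icc (0:ℝ) τ := ⟨hs.1, le_trans hs.2 ht.2⟩
            have hσ := hσdiff s hsτ
            have hσabs : sigmoid (Yc s) - sigmoid (Y0c s) ≤ ε / 4 :=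
              le_trans (le_abs_self _) hσ
            show Ω * sigmoid (Yc s) - Ω₀ * sigmoid (Y0c s) ≤
              δ * (Ω₀ * sigmoid (Y0c s)) + (1 + δ) * Ω₀ * (ε / 4)
            have f1 := mul_le_mul_of_nonneg_right
              (show Ω - Ω₀ ≤ δ * Ω₀ by linarith) (sigmoid_pos (Yc s)).le
            have f2 := mul_le_mul_of_nonneg_left hσabs
              (mul_nonneg hδ0.le hΩ₀.le)
            have f3 := mul_le_mul_of_nonneg_left hσabs hΩ₀.le
            linarith
          have hsplit : (∫ s in (0:ℝ)..t, (δ * h0 s + (1 + δ) * Ω₀ * (ε / 4))) =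
              δ * Λ0 t + t * ((1 + δ) * Ω₀ * (ε / 4)) := by
            rw [intervalIntegral.integral_add (f := fun s => δ * h0 s)
                ((continuous_const.mul hh0cont).intervalIntegrable _ _) intervalIntegrable_const,
              intervalIntegral.integral_const_mul, intervalIntegral.integral_const,
              smul_eq_mul, sub_zero]
          rw [hsplit] at hmono
          have : t * ((1 + δ) * Ω₀ * (ε / 4)) ≤ τ * ((1 + δ) * Ω₀ * (ε / 4)) :=
            mul_le_mul_of_nonneg_right ht.2 (by positivity)
          linarith
        have hl := hlogσ t ht
        linarith
      · have h1 : δ ≤ δ * (1 / (1 - δ)) := by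
          rw [mul_one_div, le_div_iff₀ h1δ]
          nlinarith
        have h2 : τ * ((1 + δ) * Ω₀ * (ε / 4)) ≤ δ * (Ω₀ * (d + 1)) := by
          have h4 := mul_le_mul_of_nonneg_left hτε
            (by positivity : (0:ℝ) ≤ (1 + δ) * Ω₀)
          have hX : (0:ℝ) ≤ Ω₀ * (((d:ℝ) + 1) * δ) := by positivity
          have h5 := mul_le_mul_of_nonneg_right
            (show (1:ℝ) + δ ≤ 3/2 by linarith) hX
          linarith
        linarith [hεeq.le, h1, h2]
  -- integration
  have hmain : (∫ t in Set.Icc (0:ℝ) τ,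
      Real.log (dens (Ω₀, η₀) x t / dens (Ω, η) x t) * dens (Ω₀, η₀) x t) ≤ c + κ := by
    set f0 : ℝ → ℝ := fun t => h0 t * Real.exp (-Λ0 t) with hf0def
    have hf0cont : Continuous f0 :=
      hh0cont.mul (Real.continuous_exp.comp hΛ0cont.neg)
    have hf0pos : ∀ t, 0 < f0 t := fun t => mul_pos (hh0pos t) (Real.exp_pos _)
    set ff : ℝ → ℝ := fun t => hf t * Real.exp (-Λf t) with hffdef
    have hffcont : Continuous ff :=
      hhfcont.mul (Real.continuous_exp.comp hΛfcont.neg)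
    have hffpos : ∀ t, 0 < ff t := fun t => mul_pos (hhfpos t) (Real.exp_pos _)
    set G : ℝ → ℝ := fun t => Real.log (f0 t / ff t) * f0 t with hGdef
    set B : ℝ → ℝ := fun t => (c + κ * Λ0 t) * f0 t with hBdef
    have hGcont : Continuous G := by
      apply Continuous.mul _ hf0cont
      exact (hf0cont.div hffcont fun t => ne_of_gt (hffpos t)).log
        fun t => ne_of_gt (div_pos (hf0pos t) (hffpos t))
    have hBcont : Continuous B :=
      (continuous_const.add (continuous_const.mul hΛ0cont)).mul hf0cont
    have hGeq : Set.EqOn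
        (fun t => Real.log (dens (Ω₀, η₀) x t / dens (Ω, η) x t) * dens (Ω₀, η₀) x t)
        G (Set.Icc (0:ℝ) τ) := by
      intro t ht
      simp only [hGdef]
      rw [hdens0 t ht.1, hdensf t ht.1]
    rw [setIntegral_congr_fun measurableSet_Icc hGeq]
    have hGB : ∀ t ∈ Set.Icc (0:ℝ) τ, G t ≤ B t := by
      intro t ht
      have hb := hbound t ht
      rw [hdens0 t ht.1, hdensf t ht.1] at hb
      exact mul_le_mul_of_nonneg_right hb (hf0pos t).le
    have step1 : (∫ t in Set.Icc (0:ℝ) τ, G t) ≤ ∫ t in Set.Icc (0:ℝ) τ, B t :=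
      setIntegral_mono_on (hGcont.integrableOn_Icc) (hBcont.integrableOn_Icc)
        measurableSet_Icc hGB
    have hIccIoc : (∫ t in Set.Icc (0:ℝ) τ, B t) = ∫ t in (0:ℝ)..τ, B t := by
      rw [intervalIntegral.integral_of_le (by linarith : (0:ℝ) ≤ τ),
        integral_Icc_eq_integral_Ioc]
    have hΦderiv : ∀ t : ℝ, HasDerivAt
        (fun u => c * (-Real.exp (-Λ0 u)) + κ * (-((1 + Λ0 u) * Real.exp (-Λ0 u))))
        (B t) t := by
      intro t
      have hE : HasDerivAt (fun u => Real.exp (-Λ0 u))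
          (Real.exp (-Λ0 t) * -(h0 t)) t :=
        by have := (Real.hasDerivAt_exp (-(Λ0 t))).comp t (hΛ0deriv t).neg; exact this
      have h1 : HasDerivAt (fun u => -Real.exp (-Λ0 u))
          (-(Real.exp (-Λ0 t) * -(h0 t))) t := hE.neg
      have h2 : HasDerivAt (fun u => (1 + Λ0 u) * Real.exp (-Λ0 u))
          ((0 + h0 t) * Real.exp (-Λ0 t) + (1 + Λ0 t) * (Real.exp (-Λ0 t) * -(h0 t))) t :=
        (((hasDerivAt_const t (1:ℝ)).add (hΛ0deriv t)).mul hE)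
      have h3 := (h1.const_mul c).add (h2.neg.const_mul κ)
      refine h3.congr_deriv ?_
      simp only [hBdef, hf0def]
      ring
    have hFTC : (∫ t in (0:ℝ)..τ, B t) =
        (c * (-Real.exp (-Λ0 τ)) + κ * (-((1 + Λ0 τ) * Real.exp (-Λ0 τ)))) -
        (c * (-Real.exp (-Λ0 0)) + κ * (-((1 + Λ0 0) * Real.exp (-Λ0 0)))) :=
      intervalIntegral.integral_eq_sub_of_hasDerivAt (fun t _ => hΦderiv t)
        (hBcont.intervalIntegrable _ _)
    refine le_trans step1 ?_
    rw [hIccIoc, hFTC, hΛ00]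
    have hL : 0 ≤ Λ0 τ := hΛ0nonneg τ (by linarith)
    have hE1 : 0 ≤ Real.exp (-Λ0 τ) := (Real.exp_pos _).le
    have hE2 : 0 ≤ (1 + Λ0 τ) * Real.exp (-Λ0 τ) := by positivity
    simp only [neg_zero, Real.exp_zero]
    nlinarith [mul_nonneg hc hE1, mul_nonneg hκ hE2]
  have hD : 0 ≤ ∫ t in Set.Ici (0:ℝ), t * dens (Ω₀, η₀) x t := by
    apply setIntegral_nonneg measurableSet_Ici
    intro t ht
    exact mul_nonneg ht (dens_nonneg _ _ _ hΩ₀.le)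
  calc (∫ t in Set.Icc (0:ℝ) τ,
      Real.log (dens (Ω₀, η₀) x t / dens (Ω, η) x t) * dens (Ω₀, η₀) x t) ≤ c + κ := hmain
    _ ≤ δ * (1 / (1 - δ) + (d + 1) / (τ + 1) + Ω₀ * (d + 1)) := hfinal
    _ ≤ _ := by
      apply mul_le_mul_of_nonneg_left _ hδ0.le
      linarith [mul_nonneg hΩ₀.le hD]

end
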